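/- arXiv:1302.1035 — 2 statements merged into one kernel-verified Lean document; each statement's English description precedes it below -/
import Mathlib

section
/- Let n be a natural number and C a linear subspace of (Fin n → ZMod 2) that is doubly even, i.e., every codeword c ∈ C has Hamming weight divisible by 4. Let v : Fin n → ZMod 2 with v ∈ C⊥. Then for every c ∈ C, the Hamming weight of c + v is congruent to the Hamming weight of v modulo 4. Consequently, if P is the diagonal linear map on ((Fin n → ZMod 2) → ℂ) defined on the standard basis by P e_x = i^{wt(x)} e_x (with i the imaginary unit and wt the Hamming weight), then P ψ_v = i^{wt(v)} ψ_v, where ψ_v = (Fintype.card C : ℝ)^(-1/2) • ∑_{c ∈ C} e_{c+v}. -/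
open scoped Classical

/-- The Hamming weight of a binary vector. -/
def wt {n : ℕ} (x : Fin n → ZMod 2) : ℕ :=
  (Finset.univ.filter fun i => x i ≠ 0).card

/-- The standard basis vector `e_x` of `(Fin n → ZMod 2) → ℂ` supported at `x`. -/
noncomputable def stdVec {n : ℕ} (x : Fin n → ZMod 2) : (Fin n → ZMod 2) → ℂ :=
  fun y => if y = x then 1 else 0

/-- The CSS basis state `ψ_v = |C|^(-1/2) ∑_{c ∈ C} e_{c+v}`. -/
noncomputable def psi {n : ℕ} (C : Submodule (ZMod 2) (Fin n → ZMod 2))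
    (v : Fin n → ZMod 2) : (Fin n → ZMod 2) → ℂ :=
  ((Fintype.card C : ℝ) ^ (-(1 : ℝ)/2)) • ∑ c : C, stdVec ((c : Fin n → ZMod 2) + v)

/-- The dual of a binary linear code. -/
def dualCode {n : ℕ} (C : Submodule (ZMod 2) (Fin n → ZMod 2)) :
    Submodule (ZMod 2) (Fin n → ZMod 2) where
  carrier := {x | ∀ c ∈ C, ∑ i, x i * c i = 0}
  zero_mem' := by intro c hc; simp
  add_mem' := by
    intro a b ha hb c hc
    have h1 := ha c hc
    have h2 := hb c hc
    simp only [Pi.add_apply, add_mul, Finset.sum_add_distrib, h1, h2, add_zero]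
  smul_mem' := by
    intro r x hx c hc
    simp only [Pi.smul_apply, smul_eq_mul, mul_assoc, ← Finset.mul_sum, hx c hc, mul_zero]

lemma pt1 : ∀ a b : ZMod 2,
    ((if a + b ≠ 0 then 1 else 0) + 2 * (if a ≠ 0 ∧ b ≠ 0 then 1 else 0) : ℕ)
      = (if a ≠ 0 then 1 else 0) + (if b ≠ 0 then 1 else 0) := by decide

lemma pt2 : ∀ a b : ZMod 2,
    (if a ≠ 0 ∧ b ≠ 0 then (1 : ZMod 2) else 0) = b * a := by decide

lemma wt_eq_sum {n : ℕ} (x : Fin n → ZMod 2) :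
    wt x = ∑ i, if x i ≠ 0 then 1 else 0 := by
  rw [wt, Finset.card_filter]

lemma key_modeq {n : ℕ} (C : Submodule (ZMod 2) (Fin n → ZMod 2))
    (hC : ∀ c ∈ C, 4 ∣ wt c)
    (v : Fin n → ZMod 2) (hv : v ∈ dualCode C)
    (c : Fin n → ZMod 2) (hc : c ∈ C) : wt (c + v) ≡ wt v [MOD 4] := by
  set S : ℕ := ∑ i, if c i ≠ 0 ∧ v i ≠ 0 then 1 else 0 with hS
  have key : wt (c + v) + 2 * S = wt c + wt v := by
    rw [wt_eq_sum, wt_eq_sum, wt_eq_sum, hS, Finset.mul_sum, ← Finset.sum_add_distrib,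
      ← Finset.sum_add_distrib]
    refine Finset.sum_congr rfl fun i _ => ?_
    simpa using pt1 (c i) (v i)
  have h2S : 2 ∣ S := by
    have hsum : ((S : ZMod 2)) = ∑ i, v i * c i := by
      rw [hS]
      push_cast
      exact Finset.sum_congr rfl fun i _ => by simpa using pt2 (c i) (v i)
    have hcast : ((S : ZMod 2)) = 0 := hsum.trans (hv c hc)
    exact (ZMod.natCast_eq_zero_iff S 2).mp hcast
  have h4 := hC c hc
  unfold Nat.ModEq
  omega

lemma I_pow_of_modeq {a b : ℕ} (h : a ≡ b [MOD 4]) :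
    Complex.I ^ a = Complex.I ^ b := by
  have key : ∀ m : ℕ, Complex.I ^ m = Complex.I ^ (m % 4) := by
    intro m
    conv_lhs => rw [← Nat.mod_add_div m 4]
    rw [pow_add, pow_mul, Complex.I_pow_four, one_pow, mul_one]
  rw [key a, key b, h]

/-- For a doubly-even binary code `C` and `v ∈ C⊥`, the weight of `c + v` is congruent
to the weight of `v` mod 4; consequently the transversal phase gate
`P e_x = i^{wt x} e_x` acts on the CSS state `ψ_v` as the scalar `i^{wt v}`. -/
theorem doubly_even_phase_gate
    {n : ℕ} (C : Submodule (ZMod 2) (Fin n → ZMod 2))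
    (hC : ∀ c ∈ C, 4 ∣ wt c)
    (v : Fin n → ZMod 2) (hv : v ∈ dualCode C) :
    (∀ c ∈ C, wt (c + v) ≡ wt v [MOD 4]) ∧
    ∀ P : ((Fin n → ZMod 2) → ℂ) →ₗ[ℂ] ((Fin n → ZMod 2) → ℂ),
      (∀ x : Fin n → ZMod 2, P (stdVec x) = Complex.I ^ wt x • stdVec x) →
      P (psi C v) = Complex.I ^ wt v • psi C v := by
  refine ⟨fun c hc => key_modeq C hC v hv c hc, fun P hP => ?_⟩
  rw [psi, P.map_smul_of_tower, map_sum]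
  have hterm : ∀ c : C, P (stdVec ((c : Fin n → ZMod 2) + v))
      = Complex.I ^ wt v • stdVec ((c : Fin n → ZMod 2) + v) := by
    intro c
    rw [hP, I_pow_of_modeq (key_modeq C hC v hv c c.2)]
  simp_rw [hterm]
  rw [← Finset.smul_sum]
  exact smul_comm _ _ _
end

section
/- Let n be a natural number, C a linear subspace of (Fin n → ZMod 2), and v : Fin n → ZMod 2. Let H_n be the linear map on ((Fin n → ZMod 2) → ℂ) defined on the standard basis by H_n e_x = 2^{-n/2} ∑_y (-1)^{⟨x,y⟩} e_y, where ⟨x,y⟩ ∈ {0,1} denotes the value of ∑ i, x i * y i in ZMod 2 lifted to an integer exponent. Then H_n ψ_v = (Fintype.card C / 2^n : ℝ)^{1/2} • ∑_{y ∈ C⊥} (-1)^{⟨v,y⟩} e_y, where ψ_v = (Fintype.card C : ℝ)^(-1/2) • ∑_{c ∈ C} e_{c+v}. In particular, the transversal Hadamard transformation maps the CSS state ψ_v for the code C to a superposition supported on the dual code C⊥. -/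
open scoped Classical

lemma neg_one_pow_val_add (a b : ZMod 2) :
    ((-1 : ℂ) ^ ((a + b).val)) = (-1) ^ a.val * (-1) ^ b.val := by
  rw [ZMod.val_add, ← neg_one_pow_eq_pow_mod_two, pow_add]

lemma charSum {n : ℕ} (C : Submodule (ZMod 2) (Fin n → ZMod 2)) (y : Fin n → ZMod 2)
    (h : ¬ ∀ c ∈ C, ∑ i, y i * c i = 0) :
    ∑ c : C, (-1 : ℂ) ^ (∑ i, (c : Fin n → ZMod 2) i * y i).val = 0 := by
  push_neg at h
  obtain ⟨c0, hc0, hne⟩ := h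
  have hc1 : ∑ i, (c0 : Fin n → ZMod 2) i * y i = 1 := by
    rw [show (∑ i, c0 i * y i) = ∑ i, y i * c0 i from
      Finset.sum_congr rfl fun i _ => mul_comm _ _]
    generalize hg : (∑ i, y i * c0 i) = a at *
    fin_cases a <;> simp_all
    · exact (hne rfl).elim
    · rfl
  set S := ∑ c : C, (-1 : ℂ) ^ (∑ i, (c : Fin n → ZMod 2) i * y i).val with hS
  have key : S = -S := by
    have h1 : S = ∑ c : C, -((-1 : ℂ) ^ (∑ i, (c : Fin n → ZMod 2) i * y i).val) := by
      rw [hS]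
      refine Fintype.sum_equiv (Equiv.addRight (⟨c0, hc0⟩ : C)) _ _ fun c => ?_
      have hexp : (∑ i, ((c : Fin n → ZMod 2) i + c0 i) * y i)
          = (∑ i, (c : Fin n → ZMod 2) i * y i) + 1 := by
        rw [← hc1, ← Finset.sum_add_distrib]
        exact Finset.sum_congr rfl fun i _ => add_mul _ _ _
      simp only [Equiv.coe_addRight]
      show ((-1 : ℂ) ^ (∑ i, (c : Fin n → ZMod 2) i * y i).val)
          = -((-1 : ℂ) ^ (∑ i, ((c : Fin n → ZMod 2) i + c0 i) * y i).val)
      rw [hexp, neg_one_pow_val_add]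
      simp [ZMod.val_one]
    exact h1.trans (by rw [Finset.sum_neg_distrib, ← hS])
  have h2 : (2 : ℂ) * S = 0 := by linear_combination key
  exact (mul_eq_zero.mp h2).resolve_left two_ne_zero

lemma scal (m k : ℕ) (hm : 0 < m) :
    (m : ℝ) ^ (-(1:ℝ)/2) * ((2:ℝ) ^ (-(k:ℝ)/2)) * (m : ℝ)
      = ((m : ℝ) / 2 ^ k) ^ ((1:ℝ)/2) := by
  have hm' : (0:ℝ) < m := by exact_mod_cast hm
  have e1 : (m:ℝ) ^ (-(1:ℝ)/2) * (m:ℝ) = (m:ℝ) ^ ((1:ℝ)/2) := by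
    nth_rewrite 2 [show (m:ℝ) = (m:ℝ) ^ (1:ℝ) from (Real.rpow_one _).symm]
    rw [← Real.rpow_add hm']; norm_num
  have e2 : (((2:ℝ)^k : ℝ)) ^ ((1:ℝ)/2) = (2:ℝ) ^ ((k:ℝ)/2) := by
    rw [← Real.rpow_natCast 2 k, ← Real.rpow_mul (by norm_num)]; ring_nf
  rw [Real.div_rpow hm'.le (by positivity), e2, mul_right_comm, e1, neg_div,
    Real.rpow_neg (by norm_num), div_eq_mul_inv];ring

/-- The transversal Hadamard transform `H_n e_x = 2^{-n/2} ∑_y (-1)^{⟨x,y⟩} e_y`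
maps the CSS state `ψ_v` of the code `C` to a signed superposition supported on the
dual code `C⊥`. -/
theorem transversal_Hadamard_on_CSS_state
    {n : ℕ} (C : Submodule (ZMod 2) (Fin n → ZMod 2)) (v : Fin n → ZMod 2)
    (Hn : ((Fin n → ZMod 2) → ℂ) →ₗ[ℂ] ((Fin n → ZMod 2) → ℂ))
    (hH : ∀ x : Fin n → ZMod 2,
      Hn (stdVec x) = ((2 : ℝ) ^ (-(n : ℝ)/2)) •
        ∑ y : Fin n → ZMod 2, ((-1 : ℂ) ^ (∑ i, x i * y i).val) • stdVec y) :
    Hn (psi C v) = (((Fintype.card C : ℝ) / 2 ^ n) ^ ((1 : ℝ)/2)) •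
      ∑ y : dualCode C,
        ((-1 : ℂ) ^ (∑ i, v i * (y : Fin n → ZMod 2) i).val) •
          stdVec (y : Fin n → ZMod 2) := by
  classical
  have hcard : 0 < Fintype.card C := Fintype.card_pos
  have hmain :
      (∑ c : C, ∑ y : Fin n → ZMod 2,
         ((-1:ℂ) ^ (∑ i, ((c : Fin n → ZMod 2) + v) i * y i).val) • stdVec y)
      = (Fintype.card C : ℂ) • ∑ y : dualCode C,
          ((-1:ℂ) ^ (∑ i, v i * (y : Fin n → ZMod 2) i).val)
            • stdVec (y : Fin n → ZMod 2) := by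
    rw [Finset.sum_comm]
    have hy : ∀ y : Fin n → ZMod 2,
        (∑ c : C, ((-1:ℂ) ^ (∑ i, ((c : Fin n → ZMod 2) + v) i * y i).val) • stdVec y)
        = (if y ∈ dualCode C then
            (Fintype.card C : ℂ) * ((-1:ℂ) ^ (∑ i, v i * y i).val) else 0) • stdVec y := by
      intro y
      rw [← Finset.sum_smul]
      congr 1
      have hsplit : ∀ c : C, ((-1:ℂ) ^ (∑ i, ((c : Fin n → ZMod 2) + v) i * y i).val)
          = ((-1:ℂ) ^ (∑ i, (c : Fin n → ZMod 2) i * y i).val)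
            * ((-1:ℂ) ^ (∑ i, v i * y i).val) := by
        intro c
        have he : (∑ i, ((c : Fin n → ZMod 2) + v) i * y i)
            = (∑ i, (c : Fin n → ZMod 2) i * y i) + (∑ i, v i * y i) := by
          rw [← Finset.sum_add_distrib]
          exact Finset.sum_congr rfl fun i _ => add_mul _ _ _
        rw [he, neg_one_pow_val_add]
      rw [Finset.sum_congr rfl fun c _ => hsplit c, ← Finset.sum_mul]
      by_cases hmem : y ∈ dualCode C
      · rw [if_pos hmem]
        congr 1
        have h1 : ∀ c : C, ((-1:ℂ) ^ (∑ i, (c : Fin n → ZMod 2) i * y i).val) = 1 := by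
          intro c
          have h0 : (∑ i, (c : Fin n → ZMod 2) i * y i) = 0 := by
            rw [show (∑ i, (c : Fin n → ZMod 2) i * y i)
                = ∑ i, y i * (c : Fin n → ZMod 2) i from
              Finset.sum_congr rfl fun i _ => mul_comm _ _]
            exact hmem _ c.2
          rw [h0]; simp
        rw [Finset.sum_congr rfl fun c _ => h1 c, Finset.sum_const]
        simp
      · rw [if_neg hmem, charSum C y hmem, zero_mul]
    rw [Finset.sum_congr rfl fun y _ => hy y]
    simp only [ite_smul, zero_smul]
    rw [← Finset.sum_filter]
    rw [Finset.sum_subtype (p := fun x => x ∈ dualCode C)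
      (Finset.univ.filter (· ∈ dualCode C))
      (fun x => by simp) (fun y => ((Fintype.card C : ℂ)
        * ((-1:ℂ) ^ (∑ i, v i * y i).val)) • stdVec y)]
    rw [Finset.smul_sum]
    exact Finset.sum_congr rfl fun y _ => (mul_smul _ _ _)
  rw [psi, LinearMap.map_smul_of_tower, map_sum]
  rw [Finset.sum_congr rfl fun (c : C) _ => hH ((c : Fin n → ZMod 2) + v)]
  rw [← Finset.smul_sum, smul_smul, hmain]
  rw [show ((Fintype.card C : ℂ)) = (((Fintype.card C : ℝ)) : ℂ) by norm_cast]
  rw [show (((Fintype.card C : ℝ) : ℂ)) •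
      (∑ y : dualCode C, ((-1:ℂ) ^ (∑ i, v i * (y : Fin n → ZMod 2) i).val)
        • stdVec (y : Fin n → ZMod 2))
      = ((Fintype.card C : ℝ)) •
      (∑ y : dualCode C, ((-1:ℂ) ^ (∑ i, v i * (y : Fin n → ZMod 2) i).val)
        • stdVec (y : Fin n → ZMod 2)) from by
    rw [← smul_one_smul ℂ ((Fintype.card C : ℝ)) _]
    norm_num]
  rw [smul_smul]
  congr 1
  exact scal (Fintype.card C) n hcard
end
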